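/- Work in ℝ², fix j ∈ {1,2}, p ∈ (1,∞), and nonzero reals c_1, c_2, and for parameters (ρ_1, ρ_2, a_1, a_2, d_1, d_2) with ρ_1 c_1 ≠ 0 and ρ_2 c_2 ≠ 0 let A = (A_1, A_2) with A_k = [[a_k, ρ_k c_k],[c_k, d_k]], and let T_A (respectively T) denote the unique continuous linear operator on L^p(ℝ², ℂ) that agrees with R_j^A (respectively with the classical Riesz transform R_j) on Schwartz functions. Then for every f ∈ L^p(ℝ², ℂ), as (ρ_1, ρ_2, a_1, a_2, d_1, d_2) → (−1, −1, 0, 0, 0, 0), the norm ‖T_A f − T f‖_{L^p(ℝ²)} converges to 0. -/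

import Mathlib

open MeasureTheory Filter Topology
open scoped Real ENNReal RealInnerProductSpace

noncomputable section

/-- The constant `c̃ₙ = Γ((n+1)/2) / π^((n+1)/2)`. -/
def rieszConst (n : ℕ) : ℝ :=
  Real.Gamma (((n : ℝ) + 1) / 2) / Real.pi ^ (((n : ℝ) + 1) / 2)

/-- The chirp function `exp(i Σₖ wₖ yₖ²)`. -/
def chirp {n : ℕ} (w : Fin n → ℝ) (y : EuclideanSpace ℝ (Fin n)) : ℂ :=
  Complex.exp (Complex.I * ((∑ k, w k * y k ^ 2 : ℝ) : ℂ))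

/-- The truncated Riesz-type singular integral
`∫_{‖x-y‖ ≥ ε} (xⱼ - yⱼ) ‖x - y‖^{-(n+1)} g y dy`. -/
def truncRiesz {n : ℕ} (j : Fin n) (g : EuclideanSpace ℝ (Fin n) → ℂ)
    (x : EuclideanSpace ℝ (Fin n)) (ε : ℝ) : ℂ :=
  ∫ y in {y : EuclideanSpace ℝ (Fin n) | ε ≤ ‖x - y‖},
    ((x j - y j : ℝ) : ℂ) / ((‖x - y‖ : ℝ) : ℂ) ^ (n + 1) * g y

/-- The principal value `lim_{ε → 0⁺}` of the truncated Riesz-type singular integral. -/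
def pvRiesz {n : ℕ} (j : Fin n) (g : EuclideanSpace ℝ (Fin n) → ℂ)
    (x : EuclideanSpace ℝ (Fin n)) : ℂ :=
  limUnder (𝓝[>] (0 : ℝ)) (truncRiesz j g x)

/-- The `j`-th linear canonical Riesz transform with parameters `a b d`
(entries of the matrices `Aₖ = [[aₖ, bₖ], [cₖ, dₖ]]`). -/
def lcRiesz {n : ℕ} (a b d : Fin n → ℝ) (j : Fin n)
    (f : EuclideanSpace ℝ (Fin n) → ℂ) (x : EuclideanSpace ℝ (Fin n)) : ℂ :=
  (rieszConst n : ℂ) * chirp (fun k => -(d k) / (2 * b k)) x *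
    pvRiesz j (fun y => f y * chirp (fun k => a k / (2 * b k)) y) x

/-- The classical `j`-th Riesz transform (principal value). -/
def rieszTrans {n : ℕ} (j : Fin n) (f : EuclideanSpace ℝ (Fin n) → ℂ)
    (x : EuclideanSpace ℝ (Fin n)) : ℂ :=
  (rieszConst n : ℂ) * pvRiesz j f x

/-- The kernel of the linear canonical transform with parameters `a b d`. -/
def lctKernel {n : ℕ} (a b d : Fin n → ℝ)
    (x u : EuclideanSpace ℝ (Fin n)) : ℂ :=
  ∏ k, ((2 * (Real.pi : ℂ) * Complex.I * (b k : ℂ))⁻¹ ^ ((1 : ℂ) / 2) *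
    (Complex.exp (Complex.I * ((a k * x k ^ 2 / (2 * b k) : ℝ) : ℂ)) *
      (Complex.exp (-(Complex.I * ((x k * u k / b k : ℝ) : ℂ))) *
        Complex.exp (Complex.I * ((d k * u k ^ 2 / (2 * b k) : ℝ) : ℂ)))))

/-- The linear canonical transform with parameters `a b d`. -/
def lct {n : ℕ} (a b d : Fin n → ℝ) (f : EuclideanSpace ℝ (Fin n) → ℂ)
    (u : EuclideanSpace ℝ (Fin n)) : ℂ :=
  ∫ x, f x * lctKernel a b d x u

end

/-- The parameter space `(ρ₁, ρ₂, a₁, a₂, d₁, d₂)` for the family of matrices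
`Aₖ = [[aₖ, ρₖ cₖ],[cₖ, dₖ]]`: a triple `(ρ, a, d)`. -/
abbrev LCParam : Type := (Fin 2 → ℝ) × (Fin 2 → ℝ) × (Fin 2 → ℝ)

/-- The limiting parameter point `(ρ, a, d) = (-1, -1, 0, 0, 0, 0)`. -/
def lcParamLimit : LCParam := (fun _ => -1, fun _ => 0, fun _ => 0)

/-- The set of admissible parameters, those with `bₖ = ρₖ cₖ ≠ 0` for `k = 1, 2`. -/
def lcParamValid (c : Fin 2 → ℝ) : Set LCParam := {q | ∀ k, q.1 k * c k ≠ 0}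

/-! ### Auxiliary material for the proof -/

noncomputable section AuxLC

open Complex ContinuousLinearMap
open scoped ContDiff

abbrev E2 : Type := EuclideanSpace ℝ (Fin 2)

/-! #### Basic properties of the chirp -/

lemma chirp_norm (w : Fin 2 → ℝ) (y : E2) : ‖chirp w y‖ = 1 := by
  rw [chirp, Complex.norm_exp]
  have h0 : (Complex.I * ((∑ k, w k * y k ^ 2 : ℝ) : ℂ)).re = 0 := by
    simp only [Complex.mul_re, Complex.I_re, Complex.I_im, Complex.ofReal_re,
      Complex.ofReal_im, zero_mul, one_mul, mul_zero, zero_sub, neg_zero, sub_zero]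
  rw [h0, Real.exp_zero]

private lemma proj_eq (k : Fin 2) :
    (fun y : E2 => y k) = ⇑(EuclideanSpace.proj (𝕜 := ℝ) k) := by
  funext y; simp

private def qCLM (w : Fin 2 → ℝ) : E2 →L[ℝ] E2 →L[ℝ] ℝ :=
  ∑ k, (2 * w k) •
    ((EuclideanSpace.proj (𝕜 := ℝ) k).smulRight (EuclideanSpace.proj (𝕜 := ℝ) k))

private def mIC : ℝ →L[ℝ] ℂ := Complex.I • Complex.ofRealCLM

private def gCLM (w : Fin 2 → ℝ) : E2 →L[ℝ] E2 →L[ℝ] ℂ :=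
  (ContinuousLinearMap.compL ℝ E2 ℝ ℂ mIC).comp (qCLM w)

private lemma hasFDerivAt_qsum (w : Fin 2 → ℝ) (y : E2) :
    HasFDerivAt (fun y : E2 => ∑ k, w k * y k ^ 2) (qCLM w y) y := by
  have h : ∀ k : Fin 2, HasFDerivAt (fun y : E2 => w k * y k ^ 2)
      (((2 * w k) • ((EuclideanSpace.proj (𝕜 := ℝ) k).smulRight
        (EuclideanSpace.proj (𝕜 := ℝ) k))) y) y := by
    intro k
    have hk : HasFDerivAt (fun y : E2 => y k) (EuclideanSpace.proj (𝕜 := ℝ) k) y := by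
      rw [proj_eq k]; exact (EuclideanSpace.proj (𝕜 := ℝ) k).hasFDerivAt
    have h2 := (hk.mul hk).const_mul (w k)
    have hfun : (fun y : E2 => w k * y k ^ 2) = fun y : E2 => w k * (y k * y k) := by
      funext z; ring
    rw [hfun]
    refine h2.congr_fderiv ?_
    ext v
    simp only [ContinuousLinearMap.coe_smul', Pi.smul_apply,
      ContinuousLinearMap.smulRight_apply, PiLp.proj_apply,
      ContinuousLinearMap.add_apply, smul_eq_mul]
    ring
  have hs := HasFDerivAt.fun_sum (fun k (_ : k ∈ Finset.univ) => h k)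
  simpa [qCLM, ContinuousLinearMap.sum_apply] using hs

private lemma chirp_eq (w : Fin 2 → ℝ) :
    chirp w = fun y : E2 => Complex.exp (mIC (∑ k, w k * y k ^ 2)) := by
  funext y
  simp [chirp, mIC, smul_eq_mul]

private lemma hasFDerivAt_chirp (w : Fin 2 → ℝ) (y : E2) :
    HasFDerivAt (chirp w) (chirp w y • gCLM w y) y := by
  have h1 : HasFDerivAt (fun y : E2 => mIC (∑ k, w k * y k ^ 2)) (gCLM w y) y := by
    have h := mIC.hasFDerivAt.comp y (hasFDerivAt_qsum w y)
    have h0 : gCLM w y = mIC.comp (qCLM w y) := rfl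
    rw [h0]; exact h
  have h2 := h1.cexp
  simp only [chirp_eq w]
  exact h2

private lemma fderiv_chirp (w : Fin 2 → ℝ) :
    fderiv ℝ (chirp w) =
      fun y => ContinuousLinearMap.lsmul ℝ ℂ (chirp w y) (gCLM w y) := by
  funext y
  rw [(hasFDerivAt_chirp w y).fderiv]
  simp [ContinuousLinearMap.lsmul_apply]

lemma contDiff_chirp (w : Fin 2 → ℝ) : ContDiff ℝ ∞ (chirp w) := by
  rw [chirp_eq w]
  apply Complex.contDiff_exp.comp
  apply mIC.contDiff.comp
  apply ContDiff.sum
  intro k _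
  apply ContDiff.mul contDiff_const
  have hco : ContDiff ℝ ∞ (fun y : E2 => y k) := by
    rw [proj_eq k]; exact (EuclideanSpace.proj (𝕜 := ℝ) k).contDiff
  exact hco.pow 2

lemma chirp_continuous (w : Fin 2 → ℝ) : Continuous (chirp w) :=
  (contDiff_chirp w).continuous

private lemma norm_iteratedFDeriv_clm_le {F : Type*} [NormedAddCommGroup F]
    [NormedSpace ℝ F] (A : E2 →L[ℝ] F) (m : ℕ) (x : E2) :
    ‖iteratedFDeriv ℝ m (⇑A) x‖ ≤ ‖A‖ * (1 + ‖x‖) := by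
  match m with
  | 0 =>
    rw [norm_iteratedFDeriv_zero]
    refine (A.le_opNorm x).trans ?_
    nlinarith [norm_nonneg A, norm_nonneg x]
  | (m+1) =>
    rw [← norm_iteratedFDeriv_fderiv]
    have hfd : fderiv ℝ (⇑A) = fun _ : E2 => A := funext fun z => A.fderiv
    rw [hfd]
    match m with
    | 0 =>
      rw [norm_iteratedFDeriv_zero]
      nlinarith [norm_nonneg A, norm_nonneg x]
    | (m+1) =>
      rw [iteratedFDeriv_const_of_ne (Nat.succ_ne_zero m)]
      simp only [Pi.zero_apply, norm_zero]
      positivity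

set_option maxHeartbeats 2000000 in
lemma chirp_hasTemperateGrowth (w : Fin 2 → ℝ) :
    Function.HasTemperateGrowth (chirp w) := by
  refine ⟨contDiff_chirp w, ?_⟩
  have key : ∀ N : ℕ, ∃ C : ℝ, 0 ≤ C ∧ ∀ i, i ≤ N → ∀ x,
      ‖iteratedFDeriv ℝ i (chirp w) x‖ ≤ C * (1 + ‖x‖) ^ N := by
    intro N
    induction N with
    | zero =>
      refine ⟨1, zero_le_one, ?_⟩
      intro i hi x
      obtain rfl := Nat.le_zero.mp hi
      rw [norm_iteratedFDeriv_zero, chirp_norm]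
      simp
    | succ N ih =>
      obtain ⟨C, hC0, hC⟩ := ih
      set B := ContinuousLinearMap.lsmul ℝ ℂ (E := E2 →L[ℝ] ℂ) with hB
      refine ⟨max C (‖B‖ * (2 ^ N * (C * ‖gCLM w‖))), le_max_of_le_left hC0, ?_⟩
      intro i hi x
      have hx1 : (1 : ℝ) ≤ 1 + ‖x‖ := by nlinarith [norm_nonneg x]
      rcases Nat.eq_or_lt_of_le hi with rfl | hlt
      · -- top derivative
        rw [← norm_iteratedFDeriv_fderiv, fderiv_chirp w]
        have hbil := B.norm_iteratedFDeriv_le_of_bilinear (contDiff_chirp w)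
          ((gCLM w).contDiff) x (n := N) (by exact_mod_cast le_top)
        refine hbil.trans ?_
        have hsum : ∑ i ∈ Finset.range (N + 1), (N.choose i : ℝ) *
              ‖iteratedFDeriv ℝ i (chirp w) x‖ * ‖iteratedFDeriv ℝ (N - i) (⇑(gCLM w)) x‖
            ≤ ∑ i ∈ Finset.range (N + 1), (N.choose i : ℝ) *
              ((C * (1 + ‖x‖) ^ N) * (‖gCLM w‖ * (1 + ‖x‖))) := by
          apply Finset.sum_le_sum
          intro i hi2
          have h1 := hC i (Nat.lt_succ_iff.mp (Finset.mem_range.mp hi2)) x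
          have h2 := norm_iteratedFDeriv_clm_le (gCLM w) (N - i) x
          have hnn : (0 : ℝ) ≤ (N.choose i : ℝ) := by positivity
          calc (N.choose i : ℝ) * ‖iteratedFDeriv ℝ i (chirp w) x‖ *
                ‖iteratedFDeriv ℝ (N - i) (⇑(gCLM w)) x‖
              ≤ (N.choose i : ℝ) * (C * (1 + ‖x‖) ^ N) * (‖gCLM w‖ * (1 + ‖x‖)) := by
                apply mul_le_mul
                · exact mul_le_mul_of_nonneg_left h1 hnn
                · exact h2
                · positivity
                · positivity
            _ = (N.choose i : ℝ) * ((C * (1 + ‖x‖) ^ N) * (‖gCLM w‖ * (1 + ‖x‖))) := by ring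
        refine (mul_le_mul_of_nonneg_left hsum (norm_nonneg B)).trans ?_
        rw [← Finset.sum_mul]
        have hch : (∑ i ∈ Finset.range (N + 1), (N.choose i : ℝ)) = 2 ^ N := by
          rw [← Nat.cast_sum]
          rw [Nat.sum_range_choose]
          push_cast
          ring
        rw [hch]
        calc ‖B‖ * ((2 : ℝ) ^ N * ((C * (1 + ‖x‖) ^ N) * (‖gCLM w‖ * (1 + ‖x‖))))
            = (‖B‖ * (2 ^ N * (C * ‖gCLM w‖))) * (1 + ‖x‖) ^ (N + 1) := by
              rw [pow_succ]; ring
          _ ≤ max C (‖B‖ * (2 ^ N * (C * ‖gCLM w‖))) * (1 + ‖x‖) ^ (N + 1) := by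
              apply mul_le_mul_of_nonneg_right (le_max_right _ _)
              positivity
      · -- lower derivatives
        have h1 := hC i (Nat.lt_succ_iff.mp hlt) x
        refine h1.trans ?_
        have h2 : (1 + ‖x‖) ^ N ≤ (1 + ‖x‖) ^ (N + 1) :=
          pow_le_pow_right₀ hx1 (Nat.le_succ N)
        calc C * (1 + ‖x‖) ^ N ≤ C * (1 + ‖x‖) ^ (N + 1) := by
              exact mul_le_mul_of_nonneg_left h2 hC0
          _ ≤ max C (‖B‖ * (2 ^ N * (C * ‖gCLM w‖))) * (1 + ‖x‖) ^ (N + 1) := by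
              apply mul_le_mul_of_nonneg_right (le_max_left _ _)
              positivity
  intro n
  obtain ⟨C, hC0, hC⟩ := key n
  exact ⟨n, C, fun x => hC n le_rfl x⟩

/-! #### Membership of Schwartz functions in `Lp` -/

variable {p : ℝ≥0∞}

lemma schwartz_memLp (f : SchwartzMap E2 ℂ) (hp1 : 1 ≤ p) (hp2 : p ≠ ⊤) :
    MemLp (⇑f) p (volume : Measure E2) := by
  have hp0 : p ≠ 0 := by
    intro h; rw [h] at hp1; exact absurd hp1 (by simp)
  have hr1 : (1 : ℝ) ≤ p.toReal := by
    have := ENNReal.toReal_mono hp2 hp1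
    simpa using this
  obtain ⟨M, hM0, hM⟩ := f.decay 0 0
  have hMx : ∀ x, ‖f x‖ ≤ M := by
    intro x; have := hM x; simpa using this
  have hmain : Integrable (fun x : E2 => ‖f x‖ ^ p.toReal) volume := by
    apply Integrable.mono' ((f.integrable (μ := volume)).norm.const_mul (M ^ (p.toReal - 1)))
    · exact (f.continuous.norm.rpow_const (fun x => Or.inr (by linarith))).aestronglyMeasurable
    · filter_upwards with x
      have h0 : (0:ℝ) ≤ ‖f x‖ := norm_nonneg _
      rw [Real.norm_eq_abs, _root_.abs_of_nonneg (Real.rpow_nonneg h0 _)]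
      have hsplit : ‖f x‖ ^ p.toReal = ‖f x‖ ^ (p.toReal - 1) * ‖f x‖ := by
        have h1 : ‖f x‖ ^ (p.toReal - 1) * ‖f x‖
            = ‖f x‖ ^ (p.toReal - 1) * ‖f x‖ ^ (1:ℝ) := by rw [Real.rpow_one]
        rw [h1, ← Real.rpow_add_of_nonneg h0 (by linarith) zero_le_one]
        congr 1
        ring
      rw [hsplit]
      exact mul_le_mul_of_nonneg_right (Real.rpow_le_rpow h0 (hMx x) (by linarith)) h0
  rw [← memLp_norm_rpow_iff (q := p) f.continuous.aestronglyMeasurable hp0 hp2,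
    ENNReal.div_self hp0 hp2, memLp_one_iff_integrable]
  exact hmain

/-! #### Multiplication by a chirp as an operator on `Lp` -/

lemma eLpNorm_chirp_mul (w : Fin 2 → ℝ) (u : E2 → ℂ) :
    eLpNorm (fun y => chirp w y * u y) p volume = eLpNorm u p volume :=
  eLpNorm_congr_norm_ae (Filter.Eventually.of_forall fun y => by
    rw [norm_mul, chirp_norm, one_mul])

lemma memLp_chirp_mul [Fact (1 ≤ p)] (w : Fin 2 → ℝ) (u : Lp ℂ p (volume : Measure E2)) :
    MemLp (fun y => chirp w y * u y) p (volume : Measure E2) := by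
  refine ⟨((chirp_continuous w).aestronglyMeasurable).mul (Lp.aestronglyMeasurable u), ?_⟩
  rw [eLpNorm_chirp_mul]
  exact (Lp.memLp u).2

def mulChirpL (p : ℝ≥0∞) [Fact (1 ≤ p)] (w : Fin 2 → ℝ) :
    Lp ℂ p (volume : Measure E2) →L[ℂ] Lp ℂ p (volume : Measure E2) :=
  LinearMap.mkContinuous
    { toFun := fun u => (memLp_chirp_mul w u).toLp _
      map_add' := by
        intro u v
        apply Lp.ext
        filter_upwards [(memLp_chirp_mul w (u + v)).coeFn_toLp,
          (memLp_chirp_mul w u).coeFn_toLp, (memLp_chirp_mul w v).coeFn_toLp,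
          Lp.coeFn_add u v,
          Lp.coeFn_add ((memLp_chirp_mul w u).toLp _) ((memLp_chirp_mul w v).toLp _)]
          with y h1 h2 h3 h4 h5
        rw [h5]
        simp only [Pi.add_apply] at h4 ⊢
        rw [h1, h2, h3, h4]
        ring
      map_smul' := by
        intro a u
        apply Lp.ext
        filter_upwards [(memLp_chirp_mul w (a • u)).coeFn_toLp,
          (memLp_chirp_mul w u).coeFn_toLp, Lp.coeFn_smul a u,
          Lp.coeFn_smul a ((memLp_chirp_mul w u).toLp _)] with y h1 h2 h3 h4
        rw [RingHom.id_apply, h4]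
        simp only [Pi.smul_apply, smul_eq_mul] at h3 ⊢
        rw [h1, h2, h3]
        ring }
    1 (fun u => by
      show ‖(memLp_chirp_mul w u).toLp _‖ ≤ 1 * ‖u‖
      rw [one_mul, Lp.norm_toLp, eLpNorm_chirp_mul, ← Lp.norm_def])

lemma norm_mulChirpL [Fact (1 ≤ p)] (w : Fin 2 → ℝ) (u : Lp ℂ p (volume : Measure E2)) :
    ‖mulChirpL p w u‖ = ‖u‖ := by
  show ‖(memLp_chirp_mul w u).toLp _‖ = ‖u‖
  rw [Lp.norm_toLp, eLpNorm_chirp_mul, ← Lp.norm_def]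

lemma coeFn_mulChirpL [Fact (1 ≤ p)] (w : Fin 2 → ℝ) (u : Lp ℂ p (volume : Measure E2)) :
    ⇑(mulChirpL p w u) =ᵐ[volume] fun y => chirp w y * u y :=
  (memLp_chirp_mul w u).coeFn_toLp

/-! #### Strong convergence of chirp multiplication operators -/

lemma tendsto_chirp_pt (y : E2) :
    Tendsto (fun w : Fin 2 → ℝ => chirp w y) (𝓝 0) (𝓝 1) := by
  have hc : Continuous (fun w : Fin 2 → ℝ => chirp w y) := by
    apply Complex.continuous_exp.comp
    apply continuous_const.mul
    apply Complex.continuous_ofReal.comp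
    exact continuous_finset_sum _ fun k _ => (continuous_apply k).mul continuous_const
  have := hc.tendsto 0
  simpa [chirp] using this

lemma tendsto_mulChirpL [Fact (1 ≤ p)] (hp0 : p ≠ 0) (hpt : p ≠ ⊤)
    (h : Lp ℂ p (volume : Measure E2)) :
    Tendsto (fun w : Fin 2 → ℝ => ‖mulChirpL p w h - h‖) (𝓝 0) (𝓝 0) := by
  have hr : 0 < p.toReal := ENNReal.toReal_pos hp0 hpt
  have hfun : ∀ w : Fin 2 → ℝ, ‖mulChirpL p w h - h‖
      = (eLpNorm (fun y => chirp w y * h y - h y) p volume).toReal := by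
    intro w
    rw [Lp.norm_def]
    congr 1
    apply eLpNorm_congr_ae
    filter_upwards [Lp.coeFn_sub (mulChirpL p w h) h, coeFn_mulChirpL w h] with y h1 h2
    rw [h1, Pi.sub_apply, h2]
  have hint : (∫⁻ y, (‖h y‖₊ : ℝ≥0∞) ^ p.toReal ∂(volume : Measure E2)) ≠ ⊤ := by
    have h2 := (Lp.memLp h).2
    rw [eLpNorm_eq_lintegral_rpow_enorm_toReal hp0 hpt] at h2
    simp only [enorm_eq_nnnorm] at h2
    intro hcon
    rw [hcon, ENNReal.top_rpow_of_pos (by positivity)] at h2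
    exact absurd h2 (lt_irrefl _)
  have key : Tendsto (fun w : Fin 2 → ℝ =>
      eLpNorm (fun y => chirp w y * h y - h y) p volume) (𝓝 0) (𝓝 0) := by
    rw [Filter.tendsto_iff_seq_tendsto]
    intro ws hws
    have hmeas : ∀ n, AEMeasurable
        (fun y : E2 => (‖chirp (ws n) y * h y - h y‖₊ : ℝ≥0∞) ^ p.toReal) volume := by
      intro n
      apply ENNReal.continuous_rpow_const.measurable.comp_aemeasurable
      exact (((chirp_continuous (ws n)).aestronglyMeasurable.mul
        (Lp.aestronglyMeasurable h)).sub (Lp.aestronglyMeasurable h)).enorm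
    have hlim : Tendsto
        (fun n => ∫⁻ y, (‖chirp (ws n) y * h y - h y‖₊ : ℝ≥0∞) ^ p.toReal ∂(volume : Measure E2))
        atTop (𝓝 0) := by
      have hDCT := tendsto_lintegral_of_dominated_convergence' (μ := (volume : Measure E2))
        (F := fun n (y : E2) => (‖chirp (ws n) y * h y - h y‖₊ : ℝ≥0∞) ^ p.toReal)
        (f := fun _ => (0 : ℝ≥0∞))
        (bound := fun y => (2 : ℝ≥0∞) ^ p.toReal * (‖h y‖₊ : ℝ≥0∞) ^ p.toReal)
        hmeas ?_ ?_ ?_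
      · simpa using hDCT
      · intro n
        filter_upwards with y
        have hnorm : ‖chirp (ws n) y * h y - h y‖ ≤ 2 * ‖h y‖ := by
          calc ‖chirp (ws n) y * h y - h y‖ ≤ ‖chirp (ws n) y * h y‖ + ‖h y‖ := norm_sub_le _ _
            _ = ‖h y‖ + ‖h y‖ := by rw [norm_mul, chirp_norm, one_mul]
            _ = 2 * ‖h y‖ := by ring
        have hb : (‖chirp (ws n) y * h y - h y‖₊ : ℝ≥0∞) ≤ 2 * (‖h y‖₊ : ℝ≥0∞) := by
          have h2 : ‖chirp (ws n) y * h y - h y‖₊ ≤ 2 * ‖h y‖₊ := by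
            rw [← NNReal.coe_le_coe]
            push_cast
            simpa using hnorm
          have h3 := ENNReal.coe_le_coe.mpr h2
          simpa [ENNReal.coe_mul] using h3
        calc (‖chirp (ws n) y * h y - h y‖₊ : ℝ≥0∞) ^ p.toReal
            ≤ (2 * (‖h y‖₊ : ℝ≥0∞)) ^ p.toReal := ENNReal.rpow_le_rpow hb hr.le
          _ = 2 ^ p.toReal * (‖h y‖₊ : ℝ≥0∞) ^ p.toReal :=
              ENNReal.mul_rpow_of_nonneg _ _ hr.le
      · rw [lintegral_const_mul' _ _ (ENNReal.rpow_ne_top_of_nonneg hr.le (by norm_num))]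
        exact ENNReal.mul_ne_top (ENNReal.rpow_ne_top_of_nonneg hr.le (by norm_num)) hint
      · filter_upwards with y
        have h1 : Tendsto (fun n => chirp (ws n) y) atTop (𝓝 1) := (tendsto_chirp_pt y).comp hws
        have h2 : Tendsto (fun n => chirp (ws n) y * h y - h y) atTop (𝓝 0) := by
          have := (h1.mul_const (h y : ℂ)).sub_const (h y : ℂ)
          simpa using this
        have h3 : Tendsto (fun n => (‖chirp (ws n) y * h y - h y‖₊ : ℝ≥0∞)) atTop (𝓝 0) := by
          rw [← ENNReal.coe_zero]
          exact ENNReal.tendsto_coe.mpr (by simpa using h2.nnnorm)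
        have h4 := ((ENNReal.continuous_rpow_const (y := p.toReal)).tendsto 0).comp h3
        simpa [Function.comp_def, ENNReal.zero_rpow_of_pos hr] using h4
    have h5 := ((ENNReal.continuous_rpow_const (y := 1/p.toReal)).tendsto 0).comp hlim
    rw [Function.comp_def] at h5
    rw [ENNReal.zero_rpow_of_pos (by positivity : (0:ℝ) < 1/p.toReal)] at h5
    have h6 : Tendsto (fun n => eLpNorm (fun y => chirp (ws n) y * h y - h y) p volume)
        atTop (𝓝 0) := by
      simp only [eLpNorm_eq_lintegral_rpow_enorm_toReal hp0 hpt]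
      exact h5
    simpa [Function.comp_def] using h6
  have h7 := (ENNReal.tendsto_toReal (a := 0) (by simp)).comp key
  simp only [ENNReal.toReal_zero] at h7
  exact (tendsto_congr fun w => hfun w).mpr (by simpa [Function.comp_def] using h7)

/-! #### Density of Schwartz functions in `Lp` -/

def toSchwartzMap (g : E2 → ℂ) (hg : ContDiff ℝ ∞ g) (hsupp : HasCompactSupport g) :
    SchwartzMap E2 ℂ where
  toFun := g
  smooth' := hg
  decay' := by
    intro k n
    have hFc : Continuous fun x : E2 => ‖x‖ ^ k * ‖iteratedFDeriv ℝ n g x‖ :=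
      (continuous_norm.pow k).mul (hg.continuous_iteratedFDeriv (by exact_mod_cast le_top)).norm
    have hFsupp : HasCompactSupport fun x : E2 => ‖x‖ ^ k * ‖iteratedFDeriv ℝ n g x‖ := by
      apply HasCompactSupport.mul_left
      exact (hsupp.iteratedFDeriv n).norm
    obtain ⟨x₀, hx₀⟩ := hFc.exists_forall_ge_of_hasCompactSupport hFsupp
    exact ⟨_, hx₀⟩

lemma dense_schwartz_Lp [Fact (1 ≤ p)] (hp0 : p ≠ 0) (hpt : p ≠ ⊤) :
    Dense {x : Lp ℂ p (volume : Measure E2) |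
      ∃ (f : SchwartzMap E2 ℂ) (hf : MemLp (⇑f) p (volume : Measure E2)),
        hf.toLp ⇑f = x} := by
  rw [Metric.dense_iff]
  intro h ε hε
  have hε3 : (0:ℝ) < ε/3 := by linarith
  set εr : ℝ≥0∞ := ENNReal.ofReal (ε/3) with hεr
  have hεr0 : εr ≠ 0 := by
    simp only [hεr, ne_eq, ENNReal.ofReal_eq_zero, not_le]
    linarith
  obtain ⟨g, hgsupp, hgclose, hgcont, hgmem⟩ :=
    (Lp.memLp h).exists_hasCompactSupport_eLpNorm_sub_le hpt hεr0
  set K : Set E2 := Metric.cthickening 1 (tsupport g) with hK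
  have hKc : IsCompact K := hgsupp.cthickening
  have hKmeas : MeasurableSet K := Metric.isClosed_cthickening.measurableSet
  have hKvol : volume K ≠ ⊤ := hKc.measure_lt_top.ne
  set cK : ℝ≥0∞ := (volume K) ^ (1 / p.toReal) with hcK
  have hcKtop : cK ≠ ⊤ := ENNReal.rpow_ne_top_of_nonneg (by positivity) hKvol
  have hdivtop : εr / (cK + 1) ≠ ⊤ :=
    (ENNReal.div_lt_top (by simp [hεr]) (by simp)).ne
  set η : ℝ := (εr / (cK + 1)).toReal with hη
  have hηpos : 0 < η := by
    apply ENNReal.toReal_pos _ hdivtop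
    simp only [ne_eq, ENNReal.div_eq_zero_iff, not_or]
    exact ⟨hεr0, by simp [hcKtop]⟩
  have hηbound : ENNReal.ofReal η * cK ≤ εr := by
    rw [hη, ENNReal.ofReal_toReal hdivtop]
    calc εr / (cK + 1) * cK ≤ εr / (cK + 1) * (cK + 1) :=
          mul_le_mul_right le_self_add _
      _ = εr := ENNReal.div_mul_cancel (by simp) (by simp [hcKtop])
  obtain ⟨δ, hδpos, hδ⟩ := Metric.uniformContinuous_iff.mp
    (hgsupp.uniformContinuous_of_continuous hgcont) η hηpos
  set δ' : ℝ := min δ 1 with hδ'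
  have hδ'pos : 0 < δ' := lt_min hδpos one_pos
  set φ : ContDiffBump (0 : E2) := ⟨δ'/2, δ', by positivity, by linarith⟩ with hφ
  set g' : E2 → ℂ := MeasureTheory.convolution (φ.normed volume) g
    (ContinuousLinearMap.lsmul ℝ ℝ) volume with hg'
  have hg'smooth : ContDiff ℝ ∞ g' :=
    HasCompactSupport.contDiff_convolution_left _ φ.hasCompactSupport_normed
      φ.contDiff_normed hgcont.locallyIntegrable
  have hg'supp : HasCompactSupport g' :=
    HasCompactSupport.convolution _ φ.hasCompactSupport_normed hgsupp
  have hclose : ∀ x, dist (g' x) (g x) ≤ η := by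
    intro x₀
    apply φ.dist_normed_convolution_le hgcont.aestronglyMeasurable
    intro x hx
    apply le_of_lt
    apply hδ
    calc dist x x₀ < δ' := by simpa [Metric.mem_ball] using hx
      _ ≤ δ := min_le_left _ _
  have hsub : Function.support (fun x => g x - g' x) ⊆ K := by
    intro x hx
    by_contra hxK
    have hgx : g x = 0 := image_eq_zero_of_notMem_tsupport
      (fun hmem => hxK (Metric.self_subset_cthickening _ hmem))
    have hg'x : g' x = 0 := by
      by_contra hne
      apply hxK
      have hx' : x ∈ Function.support g' := hne
      have h1 := MeasureTheory.support_convolution_subset (f := φ.normed volume) (g := g)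
        (L := ContinuousLinearMap.lsmul ℝ ℝ) (μ := volume) hx'
      obtain ⟨a, ha, b, hb, rfl⟩ := Set.mem_add.mp h1
      have hanorm : ‖a‖ < δ' := by
        have h2 : a ∈ Metric.ball (0 : E2) δ' := by
          have := φ.support_normed_eq (μ := volume)
          rw [this] at ha
          exact ha
        simpa [mem_ball_zero_iff] using h2
      apply Metric.mem_cthickening_of_dist_le (a + b) b 1 _ (subset_tsupport g hb)
      have hd : dist (a + b) b = ‖a‖ := by simp [dist_eq_norm]
      rw [hd]
      have := min_le_right δ 1
      linarith
    simp only [Function.mem_support, hgx, hg'x, sub_zero, ne_eq, not_true_eq_false] at hx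
  have hsecond : eLpNorm (fun x => g x - g' x) p volume ≤ εr := by
    have hind : (fun x => g x - g' x) = K.indicator (fun x => g x - g' x) :=
      (Set.indicator_eq_self.mpr hsub).symm
    calc eLpNorm (fun x => g x - g' x) p volume
        = eLpNorm (K.indicator (fun x => g x - g' x)) p volume := by rw [← hind]
      _ ≤ eLpNorm (K.indicator (fun _ => η)) p volume := by
          apply eLpNorm_mono
          intro x
          by_cases hxK : x ∈ K
          · simp only [Set.indicator_of_mem hxK]
            rw [Real.norm_eq_abs, abs_of_pos hηpos]
            calc ‖g x - g' x‖ = dist (g x) (g' x) := (dist_eq_norm _ _).symm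
              _ ≤ η := by rw [dist_comm]; exact hclose x
          · simp [Set.indicator_of_notMem hxK]
      _ = ‖η‖₊ * (volume K) ^ (1 / p.toReal) :=
          eLpNorm_indicator_const hKmeas hp0 hpt
      _ ≤ εr := by
          have hcoe : (‖η‖₊ : ℝ≥0∞) = ENNReal.ofReal η := by
            rw [← enorm_eq_nnnorm, ← ofReal_norm, Real.norm_eq_abs, abs_of_pos hηpos]
          rw [hcoe, ← hcK]
          exact hηbound
  set sf : SchwartzMap E2 ℂ := toSchwartzMap g' hg'smooth hg'supp with hsf
  have hsfmem : MemLp (⇑sf) p (volume : Measure E2) := schwartz_memLp sf Fact.out hpt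
  refine ⟨hsfmem.toLp ⇑sf, ?_, sf, hsfmem, rfl⟩
  rw [Metric.mem_ball]
  have hdist : dist (hsfmem.toLp ⇑sf) h
      = (eLpNorm ((h : E2 → ℂ) - ⇑sf) p volume).toReal := by
    rw [dist_comm, Lp.dist_def]
    congr 1
    apply eLpNorm_congr_ae
    filter_upwards [hsfmem.coeFn_toLp] with x hx
    simp only [Pi.sub_apply, hx]
  have htri : eLpNorm ((h : E2 → ℂ) - ⇑sf) p volume ≤ εr + εr := by
    have hdecomp : ((h : E2 → ℂ) - ⇑sf) = ((h : E2 → ℂ) - g) + (fun x => g x - g' x) := by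
      funext x
      show (h : E2 → ℂ) x - sf x = ((h : E2 → ℂ) x - g x) + (g x - g' x)
      have hsfx : sf x = g' x := rfl
      rw [hsfx]
      ring
    rw [hdecomp]
    refine (eLpNorm_add_le ((Lp.aestronglyMeasurable h).sub hgcont.aestronglyMeasurable)
      (hgcont.sub hg'smooth.continuous).aestronglyMeasurable Fact.out).trans ?_
    exact add_le_add hgclose hsecond
  rw [hdist]
  calc (eLpNorm ((h : E2 → ℂ) - ⇑sf) p volume).toReal ≤ (εr + εr).toReal := by
        apply ENNReal.toReal_mono _ htri
        simp [hεr]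
    _ = ε/3 + ε/3 := by
        rw [hεr, ← ENNReal.ofReal_add hε3.le hε3.le, ENNReal.toReal_ofReal (by linarith)]
    _ < ε := by linarith

end AuxLC

set_option maxHeartbeats 2000000 in
/-- In `ℝ²`, fix `j ∈ {1,2}`, `p ∈ (1,∞)`, and nonzero reals `c₁, c₂`;
for parameters `(ρ₁, ρ₂, a₁, a₂, d₁, d₂)` with `ρₖ cₖ ≠ 0` let `Aₖ = [[aₖ, ρₖ cₖ],[cₖ, dₖ]]`,
and let `T_A` (resp. `T`) denote the continuous linear operator on `L^p(ℝ², ℂ)` agreeing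
with `R_j^A` (resp. with the classical Riesz transform `R_j`) on Schwartz functions. Then
for every `g ∈ L^p(ℝ², ℂ)`, as `(ρ, a, d) → (-1, -1, 0, 0, 0, 0)`,
`‖T_A g − T g‖_{L^p(ℝ²)} → 0`. -/
theorem lcRiesz_operator_tendsto (c : Fin 2 → ℝ) (hc : ∀ k, c k ≠ 0) (j : Fin 2)
    (p : ℝ≥0∞) (hp1 : 1 < p) (hp2 : p ≠ ⊤) :
    letI : Fact (1 ≤ p) := ⟨hp1.le⟩
    ∀ (TA : LCParam → (Lp ℂ p (volume : Measure (EuclideanSpace ℝ (Fin 2))) →L[ℂ]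
        Lp ℂ p (volume : Measure (EuclideanSpace ℝ (Fin 2)))))
      (T : Lp ℂ p (volume : Measure (EuclideanSpace ℝ (Fin 2))) →L[ℂ]
        Lp ℂ p (volume : Measure (EuclideanSpace ℝ (Fin 2)))),
      (∀ q ∈ lcParamValid c, ∀ (f : SchwartzMap (EuclideanSpace ℝ (Fin 2)) ℂ)
        (hf : MemLp (⇑f) p (volume : Measure (EuclideanSpace ℝ (Fin 2)))),
        (TA q (hf.toLp ⇑f) : EuclideanSpace ℝ (Fin 2) → ℂ)
          =ᵐ[volume] lcRiesz q.2.1 (fun k => q.1 k * c k) q.2.2 j (⇑f)) →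
      (∀ (f : SchwartzMap (EuclideanSpace ℝ (Fin 2)) ℂ)
        (hf : MemLp (⇑f) p (volume : Measure (EuclideanSpace ℝ (Fin 2)))),
        (T (hf.toLp ⇑f) : EuclideanSpace ℝ (Fin 2) → ℂ)
          =ᵐ[volume] rieszTrans j (⇑f)) →
      ∀ g : Lp ℂ p (volume : Measure (EuclideanSpace ℝ (Fin 2))),
        Tendsto (fun q : LCParam => ‖TA q g - T g‖)
          (𝓝[lcParamValid c] lcParamLimit) (𝓝 0) := by
  intro TA T hTA hT g
  haveI : Fact (1 ≤ p) := ⟨hp1.le⟩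
  have hp0 : p ≠ 0 := by
    intro h; rw [h] at hp1; exact absurd hp1 (by simp)
  -- Identification of `TA q` for admissible parameters.
  have hId : ∀ q ∈ lcParamValid c,
      TA q = (mulChirpL p (fun k => -(q.2.2 k) / (2 * (q.1 k * c k)))).comp
        (T.comp (mulChirpL p (fun k => q.2.1 k / (2 * (q.1 k * c k))))) := by
    intro q hq
    apply ContinuousLinearMap.ext_on
      (Dense.mono Submodule.subset_span (dense_schwartz_Lp hp0 hp2))
    rintro x ⟨f, hf, rfl⟩
    have hfchmem : MemLp
        (⇑(SchwartzMap.bilinLeftCLM (ContinuousLinearMap.mul ℝ ℂ)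
          (chirp_hasTemperateGrowth (fun k => q.2.1 k / (2 * (q.1 k * c k)))) f)) p
        (volume : Measure (EuclideanSpace ℝ (Fin 2))) :=
      schwartz_memLp _ Fact.out hp2
    have hfchfun : ⇑(SchwartzMap.bilinLeftCLM (ContinuousLinearMap.mul ℝ ℂ)
          (chirp_hasTemperateGrowth (fun k => q.2.1 k / (2 * (q.1 k * c k)))) f)
        = fun y => f y * chirp (fun k => q.2.1 k / (2 * (q.1 k * c k))) y := rfl
    have h2 : mulChirpL p (fun k => q.2.1 k / (2 * (q.1 k * c k))) (hf.toLp ⇑f)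
        = hfchmem.toLp _ := by
      apply Lp.ext
      filter_upwards [coeFn_mulChirpL (fun k => q.2.1 k / (2 * (q.1 k * c k))) (hf.toLp ⇑f),
        hf.coeFn_toLp, hfchmem.coeFn_toLp] with y hy1 hy2 hy3
      rw [hy1, hy2, hy3]
      simp only [hfchfun]
      ring
    have h1 := hTA q hq f hf
    have h3 := hT _ hfchmem
    apply Lp.ext
    simp only [ContinuousLinearMap.comp_apply, h2]
    filter_upwards [h1,
      coeFn_mulChirpL (fun k => -(q.2.2 k) / (2 * (q.1 k * c k))) (T (hfchmem.toLp _)), h3]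
      with x hx1 hx2 hx3
    rw [hx1, hx2, hx3]
    simp only [hfchfun, lcRiesz, rieszTrans]
    ring
  -- Convergence of the weight parameters.
  have hwa : Tendsto (fun q : LCParam => (fun k => q.2.1 k / (2 * (q.1 k * c k))))
      (𝓝[lcParamValid c] lcParamLimit) (𝓝 0) := by
    apply Tendsto.mono_left _ nhdsWithin_le_nhds
    rw [tendsto_pi_nhds]
    intro k
    have hnum : Tendsto (fun q : LCParam => q.2.1 k) (𝓝 lcParamLimit) (𝓝 0) := by
      have hcont : Continuous (fun q : LCParam => q.2.1 k) :=
        (continuous_apply k).comp (continuous_fst.comp continuous_snd)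
      simpa [lcParamLimit] using hcont.tendsto lcParamLimit
    have hden : Tendsto (fun q : LCParam => 2 * (q.1 k * c k)) (𝓝 lcParamLimit)
        (𝓝 (2 * (-1 * c k))) := by
      have hcont : Continuous (fun q : LCParam => 2 * (q.1 k * c k)) :=
        continuous_const.mul (((continuous_apply k).comp continuous_fst).mul continuous_const)
      simpa [lcParamLimit] using hcont.tendsto lcParamLimit
    have hne : (2 : ℝ) * (-1 * c k) ≠ 0 := by simp [hc k]
    have := hnum.div hden hne
    simpa [Pi.div_def] using this
  have hwd : Tendsto (fun q : LCParam => (fun k => -(q.2.2 k) / (2 * (q.1 k * c k))))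
      (𝓝[lcParamValid c] lcParamLimit) (𝓝 0) := by
    apply Tendsto.mono_left _ nhdsWithin_le_nhds
    rw [tendsto_pi_nhds]
    intro k
    have hnum : Tendsto (fun q : LCParam => -(q.2.2 k)) (𝓝 lcParamLimit) (𝓝 0) := by
      have hcont : Continuous (fun q : LCParam => -(q.2.2 k)) :=
        ((continuous_apply k).comp (continuous_snd.comp continuous_snd)).neg
      simpa [lcParamLimit] using hcont.tendsto lcParamLimit
    have hden : Tendsto (fun q : LCParam => 2 * (q.1 k * c k)) (𝓝 lcParamLimit)
        (𝓝 (2 * (-1 * c k))) := by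
      have hcont : Continuous (fun q : LCParam => 2 * (q.1 k * c k)) :=
        continuous_const.mul (((continuous_apply k).comp continuous_fst).mul continuous_const)
      simpa [lcParamLimit] using hcont.tendsto lcParamLimit
    have hne : (2 : ℝ) * (-1 * c k) ≠ 0 := by simp [hc k]
    have := hnum.div hden hne
    simpa [Pi.div_def] using this
  -- The final estimate.
  have hbound : ∀ᶠ q in 𝓝[lcParamValid c] lcParamLimit,
      ‖TA q g - T g‖ ≤ ‖T‖ * ‖mulChirpL p (fun k => q.2.1 k / (2 * (q.1 k * c k))) g - g‖
        + ‖mulChirpL p (fun k => -(q.2.2 k) / (2 * (q.1 k * c k))) (T g) - T g‖ := by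
    filter_upwards [self_mem_nhdsWithin] with q hq
    rw [hId q hq]
    have hsplit : (mulChirpL p (fun k => -(q.2.2 k) / (2 * (q.1 k * c k)))).comp
        (T.comp (mulChirpL p (fun k => q.2.1 k / (2 * (q.1 k * c k))))) g - T g
        = mulChirpL p (fun k => -(q.2.2 k) / (2 * (q.1 k * c k)))
            (T (mulChirpL p (fun k => q.2.1 k / (2 * (q.1 k * c k))) g) - T g)
          + (mulChirpL p (fun k => -(q.2.2 k) / (2 * (q.1 k * c k))) (T g) - T g) := by
      simp only [ContinuousLinearMap.comp_apply, map_sub]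
      abel
    rw [hsplit]
    refine (norm_add_le _ _).trans ?_
    apply add_le_add _ le_rfl
    rw [norm_mulChirpL, ← map_sub]
    exact T.le_opNorm _
  have ht1 := (tendsto_mulChirpL hp0 hp2 g).comp hwa
  have ht2 := (tendsto_mulChirpL hp0 hp2 (T g)).comp hwd
  have hsum : Tendsto (fun q : LCParam =>
      ‖T‖ * ‖mulChirpL p (fun k => q.2.1 k / (2 * (q.1 k * c k))) g - g‖
        + ‖mulChirpL p (fun k => -(q.2.2 k) / (2 * (q.1 k * c k))) (T g) - T g‖)
      (𝓝[lcParamValid c] lcParamLimit) (𝓝 0) := by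
    have := (ht1.const_mul ‖T‖).add ht2
    simpa [Function.comp] using this
  exact squeeze_zero' (Eventually.of_forall fun q => norm_nonneg _) hbound hsum
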